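/- Let $M$ be a positive integer and define $R:\mathbb{R}^M \to \mathbb{R}$ by $R(\upsilon) = \sum_{m=1}^M \frac{\exp(\upsilon_m)}{1 + \sum_{l=1}^M \exp(\upsilon_l)}$, and let $p_m(\upsilon) = \frac{\exp(\upsilon_m)}{1 + \sum_{l=1}^M \exp(\upsilon_l)}$. Then for all $m, n \in [M]$, the second partial derivatives satisfy $\left|\frac{\partial^2 R}{\partial \upsilon_m \partial \upsilon_n}\right| \le 3 p_m(\upsilon)$ if $m = n$, and $\left|\frac{\partial^2 R}{\partial \upsilon_m \partial \upsilon_n}\right| \le 2 p_m(\upsilon) p_n(\upsilon)$ if $m \ne n$. -/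

import Mathlib

open Real BigOperators

theorem mnl_aux_diag (a s : ℝ) (ha : 0 < a) (hs1 : 1 ≤ s) (has : a ≤ s) :
    |a * (-(((s ^ 2) ^ 2)⁻¹) * (2 * s * a)) + (s ^ 2)⁻¹ * (a * 1)| ≤ 3 * (a / s) := by
  have hs : (0:ℝ) < s := lt_of_lt_of_le one_pos hs1
  have h1 : a * (-(((s ^ 2) ^ 2)⁻¹) * (2 * s * a)) + (s ^ 2)⁻¹ * (a * 1)
      = (a * s - 2 * a ^ 2) / s ^ 3 := by
    field_simp
    ring
  rw [h1, abs_le]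
  constructor
  · rw [neg_le, ← sub_nonneg]
    have key : 3 * (a / s) - -((a * s - 2 * a ^ 2) / s ^ 3)
        = (3 * a * s ^ 2 + a * s - 2 * a ^ 2) / s ^ 3 := by
      field_simp; ring
    rw [key]
    apply div_nonneg _ (by positivity)
    have h3 : a * a ≤ a * s := mul_le_mul_of_nonneg_left has ha.le
    have h4 : a * s ≤ a * (s * s) := by
      nlinarith [mul_nonneg (mul_nonneg ha.le hs.le) (sub_nonneg.mpr hs1)]
    nlinarith
  · rw [← sub_nonneg]
    have key : 3 * (a / s) - (a * s - 2 * a ^ 2) / s ^ 3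
        = (3 * a * s ^ 2 - a * s + 2 * a ^ 2) / s ^ 3 := by
      field_simp; ring
    rw [key]
    apply div_nonneg _ (by positivity)
    have h4 : a * s ≤ a * (s * s) := by
      nlinarith [mul_nonneg (mul_nonneg ha.le hs.le) (sub_nonneg.mpr hs1)]
    nlinarith [mul_nonneg (mul_nonneg ha.le hs.le) hs.le, sq_nonneg a]

theorem mnl_aux_off (a b s : ℝ) (ha : 0 < a) (hb : 0 < b) (hs1 : 1 ≤ s)
    (has : a ≤ s) (hbs : b ≤ s) :
    |a * (-(((s ^ 2) ^ 2)⁻¹) * (2 * s * b)) + (s ^ 2)⁻¹ * (a * 0)| ≤ 2 * (b / s) * (a / s) := by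
  have hs : (0:ℝ) < s := lt_of_lt_of_le one_pos hs1
  have h1 : a * (-(((s ^ 2) ^ 2)⁻¹) * (2 * s * b)) + (s ^ 2)⁻¹ * (a * 0)
      = -(2 * a * b / s ^ 3) := by
    field_simp
    ring
  rw [h1, abs_neg, abs_of_nonneg (by positivity)]
  rw [div_le_iff₀ (by positivity)]
  have h2 : 2 * (b / s) * (a / s) * s ^ 3 = 2 * a * b * s := by
    field_simp
  rw [h2]
  nlinarith [mul_nonneg (mul_pos ha hb).le (sub_nonneg.mpr hs1)]

/-- Lemma (second partial derivatives of the MNL expected value):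
For `R υ = ∑ m, exp(υ m) / (1 + ∑ l, exp(υ l))` and
`p m υ = exp(υ m) / (1 + ∑ l, exp(υ l))`, the second partial derivatives satisfy
`|∂²R/∂υ_m∂υ_n| ≤ 3 p_m(υ)` if `m = n` and `≤ 2 p_m(υ) p_n(υ)` otherwise. -/
theorem mnl_second_partial_deriv_bound (M : ℕ) (hM : 0 < M)
    (R : (Fin M → ℝ) → ℝ)
    (hR : R = fun υ => ∑ m, Real.exp (υ m) / (1 + ∑ l, Real.exp (υ l)))
    (p : Fin M → (Fin M → ℝ) → ℝ)
    (hp : p = fun m υ => Real.exp (υ m) / (1 + ∑ l, Real.exp (υ l)))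
    (υ : Fin M → ℝ) (m n : Fin M) :
    |fderiv ℝ (fun v => fderiv ℝ R v (Pi.single n 1)) υ (Pi.single m 1)|
      ≤ if m = n then 3 * p m υ else 2 * p m υ * p n υ := by
  set S : (Fin M → ℝ) → ℝ := fun v => 1 + ∑ l, Real.exp (v l) with hSdef
  have hSval : ∀ v, S v = 1 + ∑ l, Real.exp (v l) := fun v => rfl
  have hSpos : ∀ v, 0 < S v := fun v => by rw [hSval]; positivity
  have hSne : ∀ v, S v ≠ 0 := fun v => (hSpos v).ne'
  set D : (Fin M → ℝ) → (Fin M → ℝ) →L[ℝ] ℝ :=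
    fun v => ∑ l, Real.exp (v l) • (ContinuousLinearMap.proj l : (Fin M → ℝ) →L[ℝ] ℝ)
    with hDdef
  have hS : ∀ v : Fin M → ℝ, HasFDerivAt S (D v) v := by
    intro v
    have h : HasFDerivAt (fun v : Fin M → ℝ => ∑ l, Real.exp (v l)) (D v) v :=
      HasFDerivAt.fun_sum fun l _ =>
        ((ContinuousLinearMap.proj l : (Fin M → ℝ) →L[ℝ] ℝ).hasFDerivAt).exp
    exact h.const_add 1
  have hDeval : ∀ (v : Fin M → ℝ) (k : Fin M), D v (Pi.single k 1) = Real.exp (v k) := by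
    intro v k
    simp [hDdef, ContinuousLinearMap.sum_apply, Pi.single_apply]
  have hR' : R = fun v => 1 - (S v)⁻¹ := by
    funext v
    rw [hR]
    show (∑ m, Real.exp (v m) / (1 + ∑ l, Real.exp (v l))) = 1 - (S v)⁻¹
    have h : (1 : ℝ) + ∑ l, Real.exp (v l) ≠ 0 := by positivity
    rw [← Finset.sum_div, hSval v]
    field_simp
    ring
  have hRderiv : ∀ v : Fin M → ℝ, HasFDerivAt R (((S v) ^ 2)⁻¹ • D v) v := by
    intro v
    rw [hR']
    have h1 : HasFDerivAt (fun v => (S v)⁻¹) ((-((S v) ^ 2)⁻¹) • D v) v :=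
      (hasDerivAt_inv (hSne v)).comp_hasFDerivAt v (hS v)
    have h2 := h1.const_sub 1
    exact h2.congr_fderiv (by ext w; simp)
  set g : (Fin M → ℝ) → ℝ := fun v => Real.exp (v n) * ((S v) ^ 2)⁻¹ with hgdef
  have hfg : (fun v => fderiv ℝ R v (Pi.single n 1)) = g := by
    funext v
    rw [(hRderiv v).fderiv]
    simp [hgdef, hDeval, mul_comm]
  have hexp : HasFDerivAt (fun v : Fin M → ℝ => Real.exp (v n))
      (Real.exp (υ n) • (ContinuousLinearMap.proj n : (Fin M → ℝ) →L[ℝ] ℝ)) υ :=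
    ((ContinuousLinearMap.proj n : (Fin M → ℝ) →L[ℝ] ℝ).hasFDerivAt).exp
  have hinvsq : HasDerivAt (fun t : ℝ => (t ^ 2)⁻¹)
      (-((2:ℕ) * S υ ^ 1) / ((S υ) ^ 2) ^ 2) (S υ) :=
    (hasDerivAt_pow 2 (S υ)).inv (pow_ne_zero 2 (hSne υ))
  have hinv : HasFDerivAt (fun v => ((S v) ^ 2)⁻¹)
      ((-((2:ℕ) * S υ ^ 1) / ((S υ) ^ 2) ^ 2) • D υ) υ :=
    hinvsq.comp_hasFDerivAt υ (hS υ)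
  have hg : HasFDerivAt g
      (Real.exp (υ n) • ((-((2:ℕ) * S υ ^ 1) / ((S υ) ^ 2) ^ 2) • D υ) +
        ((S υ) ^ 2)⁻¹ • (Real.exp (υ n) • (ContinuousLinearMap.proj n : (Fin M → ℝ) →L[ℝ] ℝ))) υ :=
    hexp.mul hinv
  rw [hfg, hg.fderiv]
  have hval : (Real.exp (υ n) • ((-((2:ℕ) * S υ ^ 1) / ((S υ) ^ 2) ^ 2) • D υ) +
        ((S υ) ^ 2)⁻¹ • (Real.exp (υ n) • (ContinuousLinearMap.proj n : (Fin M → ℝ) →L[ℝ] ℝ)))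
        (Pi.single m 1)
      = Real.exp (υ n) * (-((((S υ) ^ 2) ^ 2)⁻¹) * (2 * S υ * Real.exp (υ m))) +
        ((S υ) ^ 2)⁻¹ * (Real.exp (υ n) * (if n = m then 1 else 0)) := by
    simp [hDeval, Pi.single_apply]
    ring
  rw [hval]
  have hpa : p n υ = Real.exp (υ n) / S υ := by rw [hp, hSval]
  have hpb : p m υ = Real.exp (υ m) / S υ := by rw [hp, hSval]
  have hapos : 0 < Real.exp (υ n) := Real.exp_pos _
  have hbpos : 0 < Real.exp (υ m) := Real.exp_pos _
  have hsum : ∀ k : Fin M, Real.exp (υ k) ≤ ∑ l, Real.exp (υ l) := fun k =>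
    Finset.single_le_sum (fun l _ => (Real.exp_pos (υ l)).le) (Finset.mem_univ k)
  have hS1 : 1 ≤ S υ := by
    rw [hSval]
    have h := Finset.sum_nonneg fun l (_ : l ∈ Finset.univ) => (Real.exp_pos (υ l)).le
    linarith
  have haS : Real.exp (υ n) ≤ S υ := by rw [hSval]; linarith [hsum n]
  have hbS : Real.exp (υ m) ≤ S υ := by rw [hSval]; linarith [hsum m]
  by_cases hmn : m = n
  · subst hmn
    rw [if_pos rfl, if_pos rfl, hpb]
    exact mnl_aux_diag (Real.exp (υ m)) (S υ) hbpos hS1 hbS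
  · rw [if_neg hmn, if_neg (fun h => hmn h.symm), hpa, hpb]
    exact mnl_aux_off (Real.exp (υ n)) (Real.exp (υ m)) (S υ) hapos hbpos hS1 haS hbS
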